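/- There exists n₀ such that for all n ≥ n₀, all vertices x, y ∈ V_n, and all integers i ≥ 0, one has | Q_n^{i+θ_n}(x,y) + Q_n^{i+1+θ_n}(x,y) - 2·2^{-n} | ≤ 2·2^{-2n}; equivalently, P_{π_n}(J_n(i+θ_n) = y, J_n(0) = x) + P_{π_n}(J_n(i+1+θ_n) = y, J_n(0) = x) = 2(1+δ_n)·2^{-2n} with |δ_n| ≤ 2^{-n}, where J_n is the simple random walk started from the uniform distribution π_n. -/

import Mathlib

open Filter

/-- The vertex set of the `n`-dimensional discrete cube. -/
abbrev V (n : ℕ) := Fin n → Bool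

/-- The one-step transition matrix of the simple random walk on `V n`. -/
noncomputable def Q (n : ℕ) : Matrix (V n) (V n) ℝ :=
  fun x y => if hammingDist x y = 1 then (n : ℝ)⁻¹ else 0

/-- `θ_n = 2⌈(3/2)(n-1) log 2 / |log(1 - 2/n)|⌉`. -/
noncomputable def θ (n : ℕ) : ℕ :=
  2 * ⌈(3 / 2 : ℝ) * ((n : ℝ) - 1) * Real.log 2 / |Real.log (1 - 2 / (n : ℝ))|⌉₊


open Finset

noncomputable def chi {n : ℕ} (S : Finset (Fin n)) (x : V n) : ℝ :=
  ∏ i ∈ S, (if x i then (-1 : ℝ) else 1)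

lemma abs_chi {n : ℕ} (S : Finset (Fin n)) (x : V n) : |chi S x| = 1 := by
  rw [chi, Finset.abs_prod]
  apply Finset.prod_eq_one
  intro i _
  by_cases h : x i <;> simp [h]

lemma chi_update {n : ℕ} (S : Finset (Fin n)) (x : V n) (j : Fin n) :
    chi S (Function.update x j (!x j)) = (if j ∈ S then (-1:ℝ) else 1) * chi S x := by
  by_cases hj : j ∈ S
  · rw [if_pos hj, chi, chi, ← Finset.prod_erase_mul _ _ hj, ← Finset.prod_erase_mul _ _ hj]
    have h1 : ∀ i ∈ S.erase j, (if Function.update x j (!x j) i then (-1:ℝ) else 1)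
        = (if x i then (-1:ℝ) else 1) := by
      intro i hi
      rw [Function.update_of_ne (Finset.ne_of_mem_erase hi)]
    rw [Finset.prod_congr rfl h1, Function.update_self]
    cases hx : x j <;> simp
  · rw [if_neg hj, one_mul, chi, chi]
    apply Finset.prod_congr rfl
    intro i hi
    rw [Function.update_of_ne (by rintro rfl; exact hj hi)]

lemma hammingDist_update {n : ℕ} (x : V n) (j : Fin n) :
    hammingDist x (Function.update x j (!x j)) = 1 := by
  rw [hammingDist]
  rw [Finset.card_eq_one]
  refine ⟨j, ?_⟩
  ext i
  simp only [Finset.mem_filter, Finset.mem_univ, true_and, Finset.mem_singleton]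
  constructor
  · intro h
    by_contra hij
    exact h (by rw [Function.update_of_ne hij])
  · rintro rfl
    rw [Function.update_self]
    simp

lemma update_inj {n : ℕ} (x : V n) :
    Function.Injective (fun j : Fin n => Function.update x j (!x j)) := by
  intro j k h
  by_contra hjk
  have := congrFun h j
  simp only [Function.update_self, Function.update_of_ne hjk] at this
  cases x j <;> simp_all

lemma update_image {n : ℕ} (x : V n) :
    Finset.image (fun j : Fin n => Function.update x j (!x j)) Finset.univ
      = Finset.univ.filter (fun z => hammingDist x z = 1) := by
  ext z
  simp only [Finset.mem_image, Finset.mem_filter, Finset.mem_univ, true_and]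
  constructor
  · rintro ⟨j, _, rfl⟩
    exact hammingDist_update x j
  · intro hz
    rw [hammingDist, Finset.card_eq_one] at hz
    obtain ⟨j, hj⟩ := hz
    have hmemj : z j ≠ x j := by
      have : j ∈ ({j} : Finset (Fin n)) := Finset.mem_singleton_self j
      rw [← hj] at this
      simp only [Finset.mem_filter] at this
      exact fun h => this.2 h.symm
    refine ⟨j, ?_⟩
    ext i
    by_cases hij : i = j
    · subst hij
      rw [Function.update_self]
      cases hx : x i <;> simp_all
    · rw [Function.update_of_ne hij]
      by_contra hne
      have : i ∈ Finset.univ.filter (fun k => x k ≠ z k) := by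
        simp only [Finset.mem_filter, Finset.mem_univ, true_and]
        exact hne
      rw [show Finset.univ.filter (fun k => x k ≠ z k) = {j} from hj] at this
      exact hij (Finset.mem_singleton.mp this)

lemma sum_Q_mul {n : ℕ} (x : V n) (f : V n → ℝ) :
    ∑ z, Q n x z * f z = (n:ℝ)⁻¹ * ∑ j : Fin n, f (Function.update x j (!x j)) := by
  have h1 : ∑ z, Q n x z * f z
      = ∑ z ∈ Finset.univ.filter (fun z => hammingDist x z = 1), (n:ℝ)⁻¹ * f z := by
    rw [Finset.sum_filter]
    apply Finset.sum_congr rfl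
    intro z _
    rw [Q]
    by_cases h : hammingDist x z = 1 <;> simp [h]
  rw [h1, ← update_image, Finset.sum_image (fun j _ k _ h => update_inj x h),
    Finset.mul_sum]

lemma eigen {n : ℕ} (hn : 0 < n) (S : Finset (Fin n)) (x : V n) :
    ∑ z, Q n x z * chi S z = (1 - 2 * S.card / n) * chi S x := by
  rw [sum_Q_mul]
  have h1 : ∀ j : Fin n, chi S (Function.update x j (!x j))
      = (if j ∈ S then (-1:ℝ) else 1) * chi S x := fun j => chi_update S x j
  rw [Finset.sum_congr rfl (fun j _ => h1 j), ← Finset.sum_mul]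
  have h2 : ∑ j : Fin n, (if j ∈ S then (-1:ℝ) else 1) = (n : ℝ) - 2 * S.card := by
    rw [Finset.sum_ite, Finset.sum_const, Finset.sum_const]
    have hc1 : (Finset.univ.filter (fun j => j ∈ S)).card = S.card := by
      congr 1; ext j; simp
    have hc2 : (Finset.univ.filter (fun j => j ∉ S)).card = n - S.card := by
      rw [Finset.filter_not, Finset.card_sdiff_of_subset (Finset.filter_subset _ _), Finset.card_univ,
        Fintype.card_fin, hc1]
    rw [hc1, hc2, nsmul_eq_mul, nsmul_eq_mul, Nat.cast_sub (Finset.card_le_card (Finset.subset_univ S) |>.trans_eq (by simp))]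
    push_cast
    ring
  rw [h2]
  have : (0:ℝ) < n := Nat.cast_pos.mpr hn
  field_simp

lemma orth {n : ℕ} (x y : V n) :
    ∑ S : Finset (Fin n), chi S x * chi S y = if x = y then (2:ℝ)^n else 0 := by
  have h1 : ∀ S : Finset (Fin n), chi S x * chi S y
      = ∏ i ∈ S, ((if x i = y i then (1:ℝ) else -1)) := by
    intro S
    rw [chi, chi, ← Finset.prod_mul_distrib]
    apply Finset.prod_congr rfl
    intro i _
    cases hx : x i <;> cases hy : y i <;> simp
  simp only [h1]
  have h2 : ∑ S : Finset (Fin n), ∏ i ∈ S, ((if x i = y i then (1:ℝ) else -1))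
      = ∏ i : Fin n, ((if x i = y i then (1:ℝ) else -1) + 1) := by
    rw [Finset.prod_add, ← Finset.powerset_univ]
    apply Finset.sum_congr rfl
    intro S _
    rw [Finset.prod_const_one, mul_one]
  rw [h2]
  by_cases hxy : x = y
  · subst hxy
    rw [if_pos rfl]
    rw [Finset.prod_congr rfl (fun i _ => by rw [if_pos rfl]; norm_num : ∀ i ∈ Finset.univ, ((if x i = x i then (1:ℝ) else -1) + 1) = 2)]
    simp
  · rw [if_neg hxy]
    obtain ⟨i, hi⟩ : ∃ i, x i ≠ y i := by
      by_contra h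
      push_neg at h
      exact hxy (funext h)
    apply Finset.prod_eq_zero (Finset.mem_univ i)
    rw [if_neg hi]
    ring

lemma Q_pow {n : ℕ} (hn : 0 < n) (l : ℕ) (x y : V n) :
    (Q n ^ l) x y
      = ((2:ℝ)^n)⁻¹ * ∑ S : Finset (Fin n), (1 - 2 * S.card / n)^l * (chi S x * chi S y) := by
  induction l generalizing x y with
  | zero =>
    simp only [pow_zero, Matrix.one_apply, one_mul]
    rw [orth]
    by_cases hxy : x = y <;> simp [hxy]
  | succ l ih =>
    rw [pow_succ', Matrix.mul_apply]
    calc ∑ z, Q n x z * (Q n ^ l) z y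
        = ∑ z, ∑ S : Finset (Fin n),
            ((2:ℝ)^n)⁻¹ * ((1 - 2*S.card/n)^l * chi S y) * (Q n x z * chi S z) := by
          refine Finset.sum_congr rfl fun z _ => ?_
          rw [ih z y, Finset.mul_sum, Finset.mul_sum]
          exact Finset.sum_congr rfl fun S _ => by ring
      _ = ∑ S : Finset (Fin n),
            ((2:ℝ)^n)⁻¹ * ((1 - 2*S.card/n)^l * chi S y) * ∑ z, Q n x z * chi S z := by
          rw [Finset.sum_comm]
          exact Finset.sum_congr rfl fun S _ => (Finset.mul_sum _ _ _).symm
      _ = _ := by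
          simp only [eigen hn]
          rw [Finset.mul_sum]
          refine Finset.sum_congr rfl fun S _ => ?_
          rw [pow_succ]
          ring

lemma theta_bound {n : ℕ} (hn : 3 ≤ n) : (1 - 2/(n:ℝ)) ^ (θ n) ≤ ((2:ℝ)^(2*n))⁻¹ := by
  have hn' : (3:ℝ) ≤ n := by exact_mod_cast hn
  have hr0 : 0 < 1 - 2/(n:ℝ) := by
    have : 2/(n:ℝ) < 1 := by rw [div_lt_one (by linarith)]; linarith
    linarith
  have hr1 : 1 - 2/(n:ℝ) < 1 := by
    have : 0 < 2/(n:ℝ) := by positivity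
    linarith
  have hlog : Real.log (1 - 2/(n:ℝ)) < 0 := Real.log_neg hr0 hr1
  have habs : |Real.log (1 - 2/(n:ℝ))| = -Real.log (1 - 2/(n:ℝ)) := abs_of_neg hlog
  have hlog2 : 0 < Real.log 2 := Real.log_pos (by norm_num)
  have hθ : (3/2 : ℝ) * ((n:ℝ)-1) * Real.log 2 / |Real.log (1 - 2/(n:ℝ))| ≤ (θ n : ℝ)/2 := by
    rw [θ]
    push_cast
    rw [mul_comm (2:ℝ), mul_div_assoc]
    simp only [mul_div_cancel_right₀ _ (two_ne_zero (α := ℝ))]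
    exact Nat.le_ceil _
  have key : (θ n : ℝ) * Real.log (1 - 2/(n:ℝ)) ≤ -(((2*n : ℕ) : ℝ) * Real.log 2) := by
    rw [habs] at hθ
    have hpos : (0:ℝ) < -Real.log (1 - 2/(n:ℝ)) := by linarith
    have h1 : (3/2 : ℝ) * ((n:ℝ)-1) * Real.log 2 ≤ (θ n : ℝ)/2 * (-Real.log (1 - 2/(n:ℝ))) :=
      (div_le_iff₀ hpos).mp hθ
    push_cast
    nlinarith
  have hpow : Real.log ((1 - 2/(n:ℝ)) ^ (θ n)) ≤ Real.log (((2:ℝ)^(2*n))⁻¹) := by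
    rw [Real.log_pow, Real.log_inv, Real.log_pow]
    exact key
  exact (Real.log_le_log_iff (pow_pos hr0 _) (by positivity)).mp hpow

/-- For all large `n`, all `x, y ∈ V_n` and all `i ≥ 0`,
`|Q^{i+θ_n}(x,y) + Q^{i+1+θ_n}(x,y) - 2·2^{-n}| ≤ 2·2^{-2n}`, i.e.
`P_{π_n}(J_n(i+θ_n)=y, J_n(0)=x) + P_{π_n}(J_n(i+1+θ_n)=y, J_n(0)=x) = 2(1+δ_n)2^{-2n}`
with `|δ_n| ≤ 2^{-n}`. -/
theorem srw_mixing : ∃ n₀ : ℕ, ∀ n ≥ n₀, ∀ x y : V n, ∀ i : ℕ,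
    |(Q n ^ (i + θ n)) x y + (Q n ^ (i + 1 + θ n)) x y - 2 * ((2 : ℝ) ^ n)⁻¹|
      ≤ 2 * ((2 : ℝ) ^ (2 * n))⁻¹ := by
  refine ⟨3, fun n hn x y i => ?_⟩
  have hn0 : 0 < n := by omega
  have hnR : (3:ℝ) ≤ n := by exact_mod_cast hn
  set l : ℕ := i + θ n with hl
  have hr0 : 0 ≤ 1 - 2/(n:ℝ) := by
    have : 2/(n:ℝ) ≤ 1 := by rw [div_le_one (by linarith)]; linarith
    linarith
  have hr1 : 1 - 2/(n:ℝ) ≤ 1 := by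
    have : 0 ≤ 2/(n:ℝ) := by positivity
    linarith
  set B : ℝ := 2 * (1 - 2/(n:ℝ)) ^ (θ n) with hB
  have hBnn : 0 ≤ B := by positivity
  have hexp : (Q n ^ (i + θ n)) x y + (Q n ^ (i + 1 + θ n)) x y - 2 * ((2 : ℝ) ^ n)⁻¹
      = ((2:ℝ)^n)⁻¹ * ∑ S ∈ Finset.univ.erase (∅ : Finset (Fin n)),
          ((1 - 2 * S.card / n)^l + (1 - 2 * S.card / n)^(l+1)) * (chi S x * chi S y) := by
    rw [show i + 1 + θ n = l + 1 by omega, Q_pow hn0, Q_pow hn0, ← mul_add,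
      ← Finset.sum_add_distrib]
    have hsum : ∀ S : Finset (Fin n),
        (1 - 2 * S.card / n)^l * (chi S x * chi S y)
          + (1 - 2 * S.card / n)^(l+1) * (chi S x * chi S y)
        = ((1 - 2 * S.card / n)^l + (1 - 2 * S.card / n)^(l+1)) * (chi S x * chi S y) :=
      fun S => by ring
    simp only [← add_mul]
    rw [← Finset.add_sum_erase _ _ (Finset.mem_univ (∅ : Finset (Fin n)))]
    have hempty : ((1 - 2 * (∅ : Finset (Fin n)).card / n)^l
        + (1 - 2 * (∅ : Finset (Fin n)).card / n)^(l+1))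
        * (chi (∅ : Finset (Fin n)) x * chi (∅ : Finset (Fin n)) y) = 2 := by
      simp [chi]
      norm_num
    rw [hempty, mul_add]
    ring
  rw [hexp, abs_mul, abs_of_pos (by positivity : (0:ℝ) < ((2:ℝ)^n)⁻¹)]
  have hterm : ∀ S ∈ Finset.univ.erase (∅ : Finset (Fin n)),
      |((1 - 2 * S.card / n)^l + (1 - 2 * S.card / n)^(l+1)) * (chi S x * chi S y)| ≤ B := by
    intro S hS
    rw [abs_mul, abs_mul, abs_chi, abs_chi, mul_one, mul_one]
    have hSne : S ≠ ∅ := Finset.ne_of_mem_erase hS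
    have hk1 : 1 ≤ S.card := Finset.card_pos.mpr (Finset.nonempty_iff_ne_empty.mpr hSne)
    have hkn : S.card ≤ n := le_trans (Finset.card_le_card (Finset.subset_univ S)) (by simp)
    by_cases hcn : S.card = n
    · have : (1 - 2 * S.card / n : ℝ) = -1 := by
        rw [hcn]
        field_simp
        ring
      rw [this]
      have : ((-1:ℝ))^l + (-1:ℝ)^(l+1) = 0 := by
        rw [pow_succ]
        ring
      rw [this, abs_zero]
      exact hBnn
    · have hkn' : S.card ≤ n - 1 := by omega
      have hknR : (S.card : ℝ) ≤ (n:ℝ) - 1 := by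
        have h : (S.card : ℝ) + 1 ≤ n := by exact_mod_cast (by omega : S.card + 1 ≤ n)
        linarith
      have hk1R : (1:ℝ) ≤ S.card := by exact_mod_cast hk1
      have habs : |1 - 2 * (S.card:ℝ) / n| ≤ 1 - 2/(n:ℝ) := by
        rw [abs_le]
        constructor
        · have h2 : 2*(S.card:ℝ)/n ≤ 2 - 2/n := by
            rw [div_le_iff₀ (by linarith : (0:ℝ) < n)]
            have h3 : (2/(n:ℝ)) * n = 2 := div_mul_cancel₀ 2 (by linarith)
            nlinarith
          linarith
        · have : 2/(n:ℝ) ≤ 2 * S.card / n := by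
            apply div_le_div_of_nonneg_right ?_ (by linarith)
            linarith
          linarith
      calc |(1 - 2 * (S.card:ℝ) / n)^l + (1 - 2 * (S.card:ℝ) / n)^(l+1)|
          ≤ |1 - 2 * (S.card:ℝ) / n|^l + |1 - 2 * (S.card:ℝ) / n|^(l+1) := by
            refine le_trans (abs_add_le _ _) ?_
            rw [abs_pow, abs_pow]
        _ ≤ (1 - 2/(n:ℝ))^l + (1 - 2/(n:ℝ))^(l+1) := by
            gcongr <;> exact abs_nonneg _
        _ ≤ (1 - 2/(n:ℝ))^(θ n) + (1 - 2/(n:ℝ))^(θ n) := by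
            gcongr (?_ + ?_) <;> exact pow_le_pow_of_le_one hr0 hr1 (by omega)
        _ = B := by rw [hB]; ring
  have hsum_bound : |∑ S ∈ Finset.univ.erase (∅ : Finset (Fin n)),
      ((1 - 2 * S.card / n)^l + (1 - 2 * S.card / n)^(l+1)) * (chi S x * chi S y)|
      ≤ (2:ℝ)^n * B := by
    refine le_trans (Finset.abs_sum_le_sum_abs _ _) ?_
    refine le_trans (Finset.sum_le_sum hterm) ?_
    rw [Finset.sum_const, nsmul_eq_mul]
    have hcard : ((Finset.univ.erase (∅ : Finset (Fin n))).card : ℝ) ≤ (2:ℝ)^n := by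
      have h1 : (Finset.univ.erase (∅ : Finset (Fin n))).card ≤ 2^n := by
        refine le_trans (Finset.card_le_card (Finset.erase_subset _ _)) ?_
        simp [Finset.card_univ]
      calc ((Finset.univ.erase (∅ : Finset (Fin n))).card : ℝ) ≤ ((2^n : ℕ) : ℝ) := by
            exact_mod_cast h1
        _ = (2:ℝ)^n := by push_cast; ring
    exact mul_le_mul_of_nonneg_right hcard hBnn
  calc ((2:ℝ)^n)⁻¹ * |∑ S ∈ Finset.univ.erase (∅ : Finset (Fin n)),
        ((1 - 2 * S.card / n)^l + (1 - 2 * S.card / n)^(l+1)) * (chi S x * chi S y)|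
      ≤ ((2:ℝ)^n)⁻¹ * ((2:ℝ)^n * B) := by
        exact mul_le_mul_of_nonneg_left hsum_bound (by positivity)
    _ = B := by
        rw [← mul_assoc, inv_mul_cancel₀ (by positivity), one_mul]
    _ ≤ 2 * ((2:ℝ)^(2*n))⁻¹ := by
        rw [hB]
        have := theta_bound hn
        linarith
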